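/- Define u(m) = (1/(2πi))∮_{|x|=1} xᵐ/z(x) dx where z is holomorphic and nonvanishing on a neighborhood of the unit circle with z² = x⁴ + a₃x³ + a₂x² + a₁x + a₀. Then for every integer m ≥ 0: -(m+2)u(m+3) = (m+3/2)a₃·u(m+2) + (m+1)a₂·u(m+1) + (m+1/2)a₁·u(m) + m·a₀·u(m-1). -/

import Mathlib

open Complex

private theorem circleIntegral_add' {f g : ℂ → ℂ} {c : ℂ} {R : ℝ}
    (hf : CircleIntegrable f c R) (hg : CircleIntegrable g c R) :
    (∮ z in C(c, R), (f z + g z)) = (∮ z in C(c, R), f z) + ∮ z in C(c, R), g z := by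
  simp only [circleIntegral, smul_add, intervalIntegral.integral_add hf.out hg.out]

private theorem circleIntegral_split5 (f₁ f₂ f₃ f₄ f₅ : ℂ → ℂ) (c : ℂ) (R : ℝ)
    (h₁ : CircleIntegrable f₁ c R) (h₂ : CircleIntegrable f₂ c R)
    (h₃ : CircleIntegrable f₃ c R) (h₄ : CircleIntegrable f₄ c R)
    (h₅ : CircleIntegrable f₅ c R) :
    (∮ x in C(c, R), (f₁ x + f₂ x + f₃ x + f₄ x + f₅ x))
      = (∮ x in C(c, R), f₁ x) + (∮ x in C(c, R), f₂ x) + (∮ x in C(c, R), f₃ x)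
        + (∮ x in C(c, R), f₄ x) + ∮ x in C(c, R), f₅ x := by
  have s4 : (∮ x in C(c, R), (f₁ x + f₂ x + f₃ x + f₄ x + f₅ x))
      = (∮ x in C(c, R), (f₁ x + f₂ x + f₃ x + f₄ x)) + ∮ x in C(c, R), f₅ x :=
    circleIntegral_add' (((h₁.add h₂).add h₃).add h₄) h₅
  have s3 : (∮ x in C(c, R), (f₁ x + f₂ x + f₃ x + f₄ x))
      = (∮ x in C(c, R), (f₁ x + f₂ x + f₃ x)) + ∮ x in C(c, R), f₄ x :=
    circleIntegral_add' ((h₁.add h₂).add h₃) h₄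
  have s2 : (∮ x in C(c, R), (f₁ x + f₂ x + f₃ x))
      = (∮ x in C(c, R), (f₁ x + f₂ x)) + ∮ x in C(c, R), f₃ x :=
    circleIntegral_add' (h₁.add h₂) h₃
  have s1 : (∮ x in C(c, R), (f₁ x + f₂ x))
      = (∮ x in C(c, R), f₁ x) + ∮ x in C(c, R), f₂ x :=
    circleIntegral_add' h₁ h₂
  rw [s4, s3, s2, s1]

/-- Define u(m) = (1/(2πi))∮_{|x|=1} xᵐ/z(x) dx where z is holomorphic and
nonvanishing on a neighborhood of the unit circle with z² = x⁴ + a₃x³ + a₂x² + a₁x + a₀.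
Then for every m ≥ 0:
-(m+2)u(m+3) = (m+3/2)a₃u(m+2) + (m+1)a₂u(m+1) + (m+1/2)a₁u(m) + m·a₀u(m-1). -/
theorem stmt_10 (a₀ a₁ a₂ a₃ : ℂ) (z : ℂ → ℂ) (U : Set ℂ)
    (hU : IsOpen U) (hsphere : Metric.sphere (0 : ℂ) 1 ⊆ U)
    (hz : DifferentiableOn ℂ z U)
    (hz0 : ∀ x ∈ U, z x ≠ 0)
    (hzsq : ∀ x ∈ U, (z x) ^ 2 = x ^ 4 + a₃ * x ^ 3 + a₂ * x ^ 2 + a₁ * x + a₀)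
    (u : ℤ → ℂ)
    (hu : ∀ m : ℤ, u m = (2 * Real.pi * I)⁻¹ * ∮ x in C(0, 1), x ^ m / z x) :
    ∀ m : ℤ, 0 ≤ m →
      -(m + 2) * u (m + 3) = (m + 3 / 2) * a₃ * u (m + 2) + (m + 1) * a₂ * u (m + 1)
        + (m + 1 / 2) * a₁ * u m + m * a₀ * u (m - 1) := by
  intro m _hm
  have hcont : ∀ k : ℤ, ∀ c : ℂ, CircleIntegrable (fun x => c * (x ^ k / z x)) 0 1 := by
    intro k c
    refine ContinuousOn.circleIntegrable zero_le_one ?_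
    refine continuousOn_const.mul (ContinuousOn.div ?_ ((hz.continuousOn).mono hsphere)
      fun x hx => hz0 x (hsphere hx))
    intro x hx
    have hx0 : x ≠ 0 := by
      intro h; rw [h] at hx; simp at hx
    exact ((continuousAt_zpow₀ x k (Or.inl hx0)).continuousWithinAt)
  have key : (∮ x in C(0, 1),
      (((m : ℂ) + 2) * (x ^ (m + 3) / z x) + (((m : ℂ) + 3 / 2) * a₃) * (x ^ (m + 2) / z x)
        + (((m : ℂ) + 1) * a₂) * (x ^ (m + 1) / z x) + (((m : ℂ) + 1 / 2) * a₁) * (x ^ m / z x)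
        + ((m : ℂ) * a₀) * (x ^ (m - 1) / z x))) = 0 := by
    refine circleIntegral.integral_eq_zero_of_hasDerivWithinAt (f := fun y => y ^ m * z y)
      zero_le_one fun x hx => ?_
    have hxU : x ∈ U := hsphere hx
    have hx0 : x ≠ 0 := by
      intro h; rw [h] at hx; simp at hx
    have hzx := hz0 x hxU
    have hzd : HasDerivAt z (deriv z x) x :=
      ((hz.differentiableAt (hU.mem_nhds hxU))).hasDerivAt
    have hpow : HasDerivAt (fun y : ℂ => y ^ m) ((m : ℂ) * x ^ (m - 1)) x :=
      hasDerivAt_zpow m x (Or.inl hx0)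
    have hsq2 : HasDerivAt (fun y => z y ^ 2) (2 * z x * deriv z x) x := by
      have : HasDerivAt (fun y => z y ^ 2) _ x := hzd.pow 2
      simpa [mul_comm, mul_assoc, mul_left_comm] using this
    have hev : (fun y => z y ^ 2) =ᶠ[nhds x]
        (fun y : ℂ => y ^ 4 + a₃ * y ^ 3 + a₂ * y ^ 2 + a₁ * y + a₀) := by
      filter_upwards [hU.mem_nhds hxU] with y hy using hzsq y hy
    have hp : HasDerivAt (fun y : ℂ => y ^ 4 + a₃ * y ^ 3 + a₂ * y ^ 2 + a₁ * y + a₀)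
        (2 * z x * deriv z x) x := hsq2.congr_of_eventuallyEq hev.symm
    have hp' : HasDerivAt (fun y : ℂ => y ^ 4 + a₃ * y ^ 3 + a₂ * y ^ 2 + a₁ * y + a₀)
        (4 * x ^ 3 + 3 * a₃ * x ^ 2 + 2 * a₂ * x + a₁) x := by
      have h1 := (((hasDerivAt_pow 4 x).add ((hasDerivAt_pow 3 x).const_mul a₃)).add
        ((hasDerivAt_pow 2 x).const_mul a₂)).add ((hasDerivAt_id x).const_mul a₁)
      have h2 := h1.add_const a₀
      refine h2.congr_deriv ?_
      push_cast; ring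
    have hzz' : 2 * z x * deriv z x = 4 * x ^ 3 + 3 * a₃ * x ^ 2 + 2 * a₂ * x + a₁ :=
      hp.unique hp'
    have hF : HasDerivAt (fun y => y ^ m * z y)
        ((m : ℂ) * x ^ (m - 1) * z x + x ^ m * deriv z x) x := hpow.mul hzd
    have e1 : x ^ m = x ^ (m - 1) * x := by
      rw [← zpow_add_one₀ hx0, sub_add_cancel]
    have e2 : x ^ (m + 1) = x ^ (m - 1) * x ^ (2 : ℕ) := by
      rw [show m + 1 = (m - 1) + 2 by ring, zpow_add₀ hx0, zpow_ofNat]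
    have e3 : x ^ (m + 2) = x ^ (m - 1) * x ^ (3 : ℕ) := by
      rw [show m + 2 = (m - 1) + 3 by ring, zpow_add₀ hx0, zpow_ofNat]
    have e4 : x ^ (m + 3) = x ^ (m - 1) * x ^ (4 : ℕ) := by
      rw [show m + 3 = (m - 1) + 4 by ring, zpow_add₀ hx0, zpow_ofNat]
    have E : (m : ℂ) * x ^ (m - 1) * z x + x ^ m * deriv z x
        = ((m : ℂ) + 2) * (x ^ (m + 3) / z x) + (((m : ℂ) + 3 / 2) * a₃) * (x ^ (m + 2) / z x)
          + (((m : ℂ) + 1) * a₂) * (x ^ (m + 1) / z x) + (((m : ℂ) + 1 / 2) * a₁) * (x ^ m / z x)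
          + ((m : ℂ) * a₀) * (x ^ (m - 1) / z x) := by
      have hsq := hzsq x hxU
      rw [e1, e2, e3, e4]
      generalize x ^ (m - 1) = t
      rw [show ((m : ℂ) + 2) * (t * x ^ (4 : ℕ) / z x)
            + (((m : ℂ) + 3 / 2) * a₃) * (t * x ^ (3 : ℕ) / z x)
            + (((m : ℂ) + 1) * a₂) * (t * x ^ (2 : ℕ) / z x)
            + (((m : ℂ) + 1 / 2) * a₁) * (t * x / z x)
            + ((m : ℂ) * a₀) * (t / z x)
          = (((m : ℂ) + 2) * (t * x ^ (4 : ℕ)) + (((m : ℂ) + 3 / 2) * a₃) * (t * x ^ (3 : ℕ))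
            + (((m : ℂ) + 1) * a₂) * (t * x ^ (2 : ℕ)) + (((m : ℂ) + 1 / 2) * a₁) * (t * x)
            + ((m : ℂ) * a₀) * t) / z x from by ring, eq_div_iff hzx]
      linear_combination ((m : ℂ) * t) * hsq + (t * x / 2) * hzz'
    rw [E] at hF
    exact hF.hasDerivWithinAt
  have split := circleIntegral_split5
    (fun x => ((m : ℂ) + 2) * (x ^ (m + 3) / z x))
    (fun x => (((m : ℂ) + 3 / 2) * a₃) * (x ^ (m + 2) / z x))
    (fun x => (((m : ℂ) + 1) * a₂) * (x ^ (m + 1) / z x))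
    (fun x => (((m : ℂ) + 1 / 2) * a₁) * (x ^ m / z x))
    (fun x => ((m : ℂ) * a₀) * (x ^ (m - 1) / z x)) 0 1
    (hcont _ _) (hcont _ _) (hcont _ _) (hcont _ _) (hcont _ _)
  rw [split] at key
  simp only [circleIntegral.integral_const_mul] at key
  simp only [hu]
  linear_combination (-(2 * (Real.pi : ℂ) * I)⁻¹) * key
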